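/- arXiv:1012.4599 — 3 statements merged into one kernel-verified Lean document; each statement's English description precedes it below -/
import Mathlib

section
/- Let X be a real inner product space and F : [0,∞) × X → X. Suppose (F(t,x), x) ≤ 0 for all x ∈ X and t ≥ 0, and that F(t,x) = A(t,x) + f(t,x,x) where A(t,·) is linear and f(t,·,·) is bilinear with ‖f(t,x,y)‖ ≤ c(t)·‖x‖·‖y‖ for some function c : [0,∞) → ℝ. Then for all x, y ∈ X and t ≥ 0: (F(t,x) − F(t,y), x − y) ≤ 2·c(t)·‖y‖·‖x − y‖². -/
/-- Remark 4.1: if `(F(t,x),x) ≤ 0` and `F(t,x) = A(t,x) + f(t,x,x)` with `A(t,·)`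
linear and `f(t,·,·)` bilinear with `‖f(t,x,y)‖ ≤ c(t)‖x‖‖y‖`, then
`(F(t,x) - F(t,y), x - y) ≤ 2 c(t) ‖y‖ ‖x - y‖²`. -/
theorem stmt1 {X : Type*} [NormedAddCommGroup X] [InnerProductSpace ℝ X]
    (F A : ℝ → X → X) (f : ℝ → X → X → X) (c : ℝ → ℝ)
    (hneg : ∀ t ≥ (0:ℝ), ∀ x : X, (inner ℝ (F t x) x : ℝ) ≤ 0)
    (hA : ∀ t ≥ (0:ℝ), IsLinearMap ℝ (A t))
    (hf1 : ∀ t ≥ (0:ℝ), ∀ y : X, IsLinearMap ℝ (fun x => f t x y))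
    (hf2 : ∀ t ≥ (0:ℝ), ∀ x : X, IsLinearMap ℝ (f t x))
    (hfb : ∀ t ≥ (0:ℝ), ∀ x y : X, ‖f t x y‖ ≤ c t * ‖x‖ * ‖y‖)
    (hdec : ∀ t ≥ (0:ℝ), ∀ x : X, F t x = A t x + f t x x) :
    ∀ t ≥ (0:ℝ), ∀ x y : X,
      (inner ℝ (F t x - F t y) (x - y) : ℝ) ≤ 2 * c t * ‖y‖ * ‖x - y‖ ^ 2 := by
  intro t ht x y
  set z := x - y with hz
  have hx : x = z + y := by rw [hz]; abel
  have e1 : f t (z + y) (z + y) = f t z z + f t z y + f t y z + f t y y := by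
    have h1 := (hf1 t ht (z + y)).map_add z y
    have h2 := (hf2 t ht z).map_add z y
    have h3 := (hf2 t ht y).map_add z y
    rw [h1, h2, h3]; abel
  have key : F t x - F t y = F t z + f t z y + f t y z := by
    rw [hdec t ht x, hdec t ht y, hdec t ht z, hx, e1, (hA t ht).map_add z y]
    abel
  have expand : (inner ℝ (F t x - F t y) z : ℝ)
      = inner ℝ (F t z) z + inner ℝ (f t z y) z + inner ℝ (f t y z) z := by
    rw [key, inner_add_left, inner_add_left]
  rw [expand]
  have h0 := hneg t ht z
  have cs1 := real_inner_le_norm (f t z y) z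
  have cs2 := real_inner_le_norm (f t y z) z
  have b1 := hfb t ht z y
  have b2 := hfb t ht y z
  have nz : (0:ℝ) ≤ ‖z‖ := norm_nonneg z
  nlinarith [sq_nonneg ‖z‖]
end

section
/- Let X be a real Hilbert space, F : [0,∞) × X → X, and d : [0,∞) × X → ℝ locally bounded, with (F(t,x) − F(t,y), x − y) ≤ d(t,y)·‖x − y‖² for all x, y ∈ X and t ≥ 0. If u, v : [0,T] → X are differentiable with u'(t) = F(t,u(t)), and E(t) := −v'(t) + F(t,v(t)), then for all t ∈ [0,T]: ‖u(t) − v(t)‖² ≤ exp(∫₀ᵗ 2·d(s,v(s)) ds) · [‖u(0) − v(0)‖² + 2·∫₀ᵗ exp(−∫₀ˢ 2·d(ξ,v(ξ)) dξ)·(E(s), u(s) − v(s)) ds], provided t ↦ d(t,v(t)) and t ↦ (E(t), u(t) − v(t)) are integrable on (0,T). -/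
open MeasureTheory Set

lemma expLip {a b C : ℝ} (ha : a ≤ C) (hb : b ≤ C) :
    |Real.exp a - Real.exp b| ≤ Real.exp C * |a - b| := by
  wlog h : b ≤ a generalizing a b
  · rw [abs_sub_comm, abs_sub_comm a b]; exact this hb ha (le_of_not_ge h)
  rw [abs_of_nonneg (sub_nonneg.2 (Real.exp_le_exp.2 h)), abs_of_nonneg (sub_nonneg.2 h)]
  have h1 : b - a + 1 ≤ Real.exp (b - a) := Real.add_one_le_exp (b - a)
  have h2 : Real.exp b = Real.exp a * Real.exp (b - a) := by rw [← Real.exp_add]; ring_nf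
  have h3 : Real.exp a ≤ Real.exp C := Real.exp_le_exp.2 ha
  nlinarith [Real.exp_pos a, Real.exp_pos (b-a)]

lemma primAbs {q : ℝ → ℝ} (hq : Integrable q) (a b : ℝ) :
    |∫ x in a..b, q x| ≤ ∫ x, |q x| := by
  calc |∫ x in a..b, q x| ≤ ∫ x in Set.uIoc a b, ‖q x‖ := by
        simpa [Real.norm_eq_abs] using intervalIntegral.norm_integral_le_integral_norm_uIoc
          (a := a) (b := b) (f := q) (μ := volume)
    _ ≤ ∫ x, |q x| := by
        simp only [Real.norm_eq_abs]
        exact setIntegral_le_integral hq.abs (Filter.Eventually.of_forall fun x => abs_nonneg _)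

lemma ode_cont (g k : ℝ → ℝ) (hg : Continuous g) (hk : Continuous k) (c0 t₁ t₂ : ℝ) :
    (Real.exp (∫ s in (0:ℝ)..t₂, g s) *
        (c0 + ∫ s in (0:ℝ)..t₂, Real.exp (-∫ x in (0:ℝ)..s, g x) * k s)) -
      (Real.exp (∫ s in (0:ℝ)..t₁, g s) *
        (c0 + ∫ s in (0:ℝ)..t₁, Real.exp (-∫ x in (0:ℝ)..s, g x) * k s)) =
      ∫ s in t₁..t₂, (g s * (Real.exp (∫ x in (0:ℝ)..s, g x) *
        (c0 + ∫ x in (0:ℝ)..s, Real.exp (-∫ r in (0:ℝ)..x, g r) * k x)) + k s) := by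
  set A : ℝ → ℝ := fun t => ∫ s in (0:ℝ)..t, g s with hA
  have hAd : ∀ t : ℝ, HasDerivAt A (g t) t := fun t =>
    intervalIntegral.integral_hasDerivAt_right (hg.intervalIntegrable _ _)
      (hg.stronglyMeasurableAtFilter _ _) hg.continuousAt
  have hAc : Continuous A := continuous_iff_continuousAt.2 fun t => (hAd t).continuousAt
  have hint : Continuous fun s => Real.exp (-A s) * k s := ((hAc.neg).rexp).mul hk
  set c : ℝ → ℝ := fun t => ∫ s in (0:ℝ)..t, Real.exp (-A s) * k s with hc
  have hcd : ∀ t : ℝ, HasDerivAt c (Real.exp (-A t) * k t) t := fun t =>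
    intervalIntegral.integral_hasDerivAt_right (hint.intervalIntegrable _ _)
      (hint.stronglyMeasurableAtFilter _ _) hint.continuousAt
  set y : ℝ → ℝ := fun t => Real.exp (A t) * (c0 + c t) with hy
  have hyd : ∀ t : ℝ, HasDerivAt y (g t * y t + k t) t := by
    intro t
    have h1 : HasDerivAt (fun t => Real.exp (A t)) (Real.exp (A t) * g t) t := (hAd t).exp
    have h2 : HasDerivAt (fun t => c0 + c t) (Real.exp (-A t) * k t) t := by
      have := (hasDerivAt_const t c0).add (hcd t); rw [zero_add] at this; exact this
    have := h1.mul h2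
    refine this.congr_deriv ?_
    simp only [hy, Real.exp_neg]
    field_simp
  have hyc : Continuous y := continuous_iff_continuousAt.2 fun t => (hyd t).continuousAt
  have := intervalIntegral.integral_eq_sub_of_hasDerivAt (f := y) (a := t₁) (b := t₂)
    (f' := fun s => g s * y s + k s) (fun s _ => hyd s)
    (((hg.mul hyc).add hk).intervalIntegrable _ _)
  show y t₂ - y t₁ = ∫ s in t₁..t₂, (g s * y s + k s)
  exact this.symm

set_option maxHeartbeats 1000000 in
lemma ode_identity (h m : ℝ → ℝ) (hh : Integrable h) (hm : Integrable m) (c0 t₁ t₂ : ℝ) :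
    (Real.exp (∫ s in (0:ℝ)..t₂, h s) *
        (c0 + ∫ s in (0:ℝ)..t₂, Real.exp (-∫ x in (0:ℝ)..s, h x) * m s)) -
      (Real.exp (∫ s in (0:ℝ)..t₁, h s) *
        (c0 + ∫ s in (0:ℝ)..t₁, Real.exp (-∫ x in (0:ℝ)..s, h x) * m s)) =
      ∫ s in t₁..t₂, (h s * (Real.exp (∫ x in (0:ℝ)..s, h x) *
        (c0 + ∫ x in (0:ℝ)..s, Real.exp (-∫ r in (0:ℝ)..x, h r) * m x)) + m s) := by
  set A : ℝ → ℝ := fun t => ∫ s in (0:ℝ)..t, h s with hA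
  have hAc : Continuous A := hh.continuous_primitive 0
  set B : ℝ := ∫ x, |h x| with hB
  set Bm : ℝ := ∫ x, |m x| with hBm
  have hB0 : 0 ≤ B := integral_nonneg fun x => abs_nonneg _
  have hBm0 : 0 ≤ Bm := integral_nonneg fun x => abs_nonneg _
  have hAb : ∀ t, |A t| ≤ B := fun t => primAbs hh 0 t
  set EB : ℝ := Real.exp (B + 1) with hEB
  have hEB1 : 1 ≤ EB := by
    rw [hEB]; linarith [Real.add_one_le_exp (B + 1)]
  have hEB0 : (0:ℝ) < EB := lt_of_lt_of_le one_pos hEB1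
  have hexpA : ∀ t, Real.exp (A t) ≤ EB := fun t => Real.exp_le_exp.2 (by
    have := (abs_le.1 (hAb t)).2; linarith)
  have hexpAneg : ∀ t, Real.exp (-A t) ≤ EB := fun t => Real.exp_le_exp.2 (by
    have := (abs_le.1 (hAb t)).1; linarith)
  have hcint : Integrable (fun s => Real.exp (-A s) * m s) :=
    hm.bdd_mul ((hAc.neg).rexp).aestronglyMeasurable
      (Filter.Eventually.of_forall fun s => by
        rw [Real.norm_eq_abs, abs_of_pos (Real.exp_pos _)]; exact hexpAneg s)
  set c : ℝ → ℝ := fun t => ∫ s in (0:ℝ)..t, Real.exp (-A s) * m s with hc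
  have hcc : Continuous c := hcint.continuous_primitive 0
  have hcb : ∀ t, |c t| ≤ EB * Bm := by
    intro t
    refine (primAbs hcint 0 t).trans ?_
    have h2 : ∫ x, |Real.exp (-A x) * m x| ≤ ∫ x, EB * |m x| := by
      refine integral_mono hcint.abs (hm.abs.const_mul EB) fun s => ?_
      rw [abs_mul, abs_of_pos (Real.exp_pos _)]
      exact mul_le_mul_of_nonneg_right (hexpAneg s) (abs_nonneg _)
    rw [MeasureTheory.integral_const_mul] at h2
    exact h2.trans_eq (by rw [hBm])
  set y : ℝ → ℝ := fun t => Real.exp (A t) * (c0 + c t) with hy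
  have hyc : Continuous y := (hAc.rexp).mul (continuous_const.add hcc)
  set YB : ℝ := EB * (|c0| + EB * Bm) with hYB
  have hyb : ∀ t, |y t| ≤ YB := by
    intro t
    have h2 : |y t| = Real.exp (A t) * |c0 + c t| := by
      rw [hy, abs_mul, abs_of_pos (Real.exp_pos _)]
    rw [h2, hYB]
    have h1 : |c0 + c t| ≤ |c0| + EB * Bm := (abs_add_le _ _).trans (by linarith [hcb t])
    exact mul_le_mul (hexpA t) h1 (abs_nonneg _) hEB0.le
  have hYB0 : 0 ≤ YB := le_trans (abs_nonneg _) (hyb 0)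
  have hhy : Integrable (fun s => h s * y s + m s) := by
    refine Integrable.add ?_ hm
    have : Integrable (fun s => y s * h s) :=
      hh.bdd_mul hyc.aestronglyMeasurable
        (Filter.Eventually.of_forall fun s => by rw [Real.norm_eq_abs]; exact hyb s)
    exact this.congr (Filter.Eventually.of_forall fun s => mul_comm _ _)
  show y t₂ - y t₁ = ∫ s in t₁..t₂, (h s * y s + m s)
  by_contra hne
  set D : ℝ := y t₂ - y t₁ - ∫ s in t₁..t₂, (h s * y s + m s) with hD
  have hD0 : 0 < |D| := abs_pos.2 (sub_ne_zero.2 hne)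
  -- constants
  set K₁ : ℝ := EB * (|c0| + EB * Bm) + EB ^ 2 * (Bm + 2) with hK₁
  set YB' : ℝ := EB * (|c0| + EB * (Bm + 1)) with hYB'
  set K₂ : ℝ := 2 * K₁ + B * K₁ + YB' + 2 with hK₂
  have hBmEB : 0 ≤ EB * Bm := mul_nonneg hEB0.le hBm0
  have hK₁0 : 0 ≤ K₁ := by
    rw [hK₁]
    have h1 : 0 ≤ EB * (|c0| + EB * Bm) :=
      mul_nonneg hEB0.le (add_nonneg (abs_nonneg _) hBmEB)
    nlinarith
  have hYB'0 : 0 ≤ YB' := by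
    rw [hYB']
    exact mul_nonneg hEB0.le (add_nonneg (abs_nonneg _) (mul_nonneg hEB0.le (by linarith)))
  have hK₂0 : 0 < K₂ := by
    rw [hK₂]
    nlinarith [mul_nonneg hB0 hK₁0]
  suffices hbound : |D| ≤ |D| / 2 by linarith
  -- choose δ and approximations
  set ε : ℝ := |D| / 2 with hε
  have hε0 : 0 < ε := half_pos hD0
  set δ : ℝ := min 1 (ε / K₂) with hδ
  have hδ0 : 0 < δ := lt_min one_pos (div_pos hε0 hK₂0)
  have hδ1 : δ ≤ 1 := min_le_left _ _
  have hδK : K₂ * δ ≤ ε := by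
    rw [mul_comm]
    exact (mul_le_mul_of_nonneg_right (min_le_right 1 (ε / K₂)) hK₂0.le).trans_eq
      (div_mul_cancel₀ ε hK₂0.ne')
  obtain ⟨g, -, hgL1, hgc, hgint⟩ := hh.exists_hasCompactSupport_integral_sub_le hδ0
  obtain ⟨k, -, hkL1, hkc, hkint⟩ := hm.exists_hasCompactSupport_integral_sub_le hδ0
  simp only [Real.norm_eq_abs] at hgL1 hkL1
  have hmk : Integrable (fun x => m x - k x) := hm.sub hkint
  have hhg : Integrable (fun x => h x - g x) := hh.sub hgint
  set A' : ℝ → ℝ := fun t => ∫ s in (0:ℝ)..t, g s with hA'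
  have hAd : ∀ t, |A t - A' t| ≤ δ := by
    intro t
    have e1 : A t - A' t = ∫ s in (0:ℝ)..t, (h s - g s) :=
      (intervalIntegral.integral_sub (hh.intervalIntegrable)
        (hgint.intervalIntegrable)).symm
    rw [e1]
    exact (primAbs hhg 0 t).trans hgL1
  have hA'b : ∀ t, |A' t| ≤ B + 1 := by
    intro t
    have := abs_sub_abs_le_abs_sub (A' t) (A t)
    have h2 := hAd t
    rw [abs_sub_comm] at h2
    linarith [hAb t]
  have hexpA' : ∀ t, Real.exp (A' t) ≤ EB := fun t => Real.exp_le_exp.2 ((abs_le.1 (hA'b t)).2)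
  have hexpA'neg : ∀ t, Real.exp (-A' t) ≤ EB := fun t => Real.exp_le_exp.2 (by
    have := (abs_le.1 (hA'b t)).1; linarith)
  have hexp1 : ∀ t, |Real.exp (A t) - Real.exp (A' t)| ≤ EB * δ := by
    intro t
    have := expLip (C := B + 1) (a := A t) (b := A' t)
      (by linarith [(abs_le.1 (hAb t)).2]) ((abs_le.1 (hA'b t)).2)
    refine this.trans ?_
    rw [← hEB]
    exact mul_le_mul_of_nonneg_left (hAd t) hEB0.le
  have hexp2 : ∀ t, |Real.exp (-A t) - Real.exp (-A' t)| ≤ EB * δ := by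
    intro t
    have := expLip (C := B + 1) (a := -A t) (b := -A' t)
      (by linarith [(abs_le.1 (hAb t)).1]) (by linarith [(abs_le.1 (hA'b t)).1])
    refine this.trans ?_
    rw [← hEB]
    rw [show -A t - -A' t = -(A t - A' t) by ring, abs_neg]
    exact mul_le_mul_of_nonneg_left (hAd t) hEB0.le
  have hkabs : ∫ x, |k x| ≤ Bm + 1 := by
    have hmka : Integrable (fun x => |m x - k x|) := hmk.abs
    have hma : Integrable (fun x => |m x|) := hm.abs
    have h1 : Integrable (fun x => |m x - k x| + |m x|) := hmka.add hma
    have h2 : ∫ x, |k x| ≤ ∫ x, (|m x - k x| + |m x|) := by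
      refine integral_mono hkint.abs h1 fun x => ?_
      have := abs_sub_abs_le_abs_sub (k x) (m x)
      rw [abs_sub_comm] at this
      linarith [abs_nonneg (m x)]
    rw [MeasureTheory.integral_add hmka hma] at h2
    have h3 : ∫ x, |m x - k x| ≤ δ := hkL1
    have h4 : Bm = ∫ x, |m x| := hBm
    linarith
  have hA'c : Continuous A' := hgint.continuous_primitive 0
  have hc'int : Integrable (fun s => Real.exp (-A' s) * k s) :=
    hkint.bdd_mul ((hA'c.neg).rexp).aestronglyMeasurable
      (Filter.Eventually.of_forall fun s => by
        rw [Real.norm_eq_abs, abs_of_pos (Real.exp_pos _)]; exact hexpA'neg s)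
  set c' : ℝ → ℝ := fun t => ∫ s in (0:ℝ)..t, Real.exp (-A' s) * k s with hc'
  have hcd : ∀ t, |c t - c' t| ≤ EB * δ * (Bm + 2) := by
    intro t
    have e1 : c t - c' t = ∫ s in (0:ℝ)..t,
        (Real.exp (-A s) * m s - Real.exp (-A' s) * k s) :=
      (intervalIntegral.integral_sub (hcint.intervalIntegrable)
        (hc'int.intervalIntegrable)).symm
    rw [e1]
    have hcds : Integrable (fun s => Real.exp (-A s) * m s - Real.exp (-A' s) * k s) :=
      hcint.sub hc'int
    refine (primAbs hcds 0 t).trans ?_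
    have hi1 : Integrable (fun s => EB * |m s - k s|) := hmk.abs.const_mul EB
    have hi2 : Integrable (fun s => EB * δ * |k s|) := hkint.abs.const_mul (EB * δ)
    have hint2 : Integrable (fun s => EB * |m s - k s| + EB * δ * |k s|) := hi1.add hi2
    have h2 : ∫ x, |Real.exp (-A x) * m x - Real.exp (-A' x) * k x| ≤
        ∫ x, (EB * |m x - k x| + EB * δ * |k x|) := by
      refine integral_mono hcds.abs hint2 fun s => ?_
      have e2 : Real.exp (-A s) * m s - Real.exp (-A' s) * k s =
          Real.exp (-A s) * (m s - k s) + (Real.exp (-A s) - Real.exp (-A' s)) * k s := by ring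
      rw [e2]
      refine (abs_add_le _ _).trans ?_
      rw [abs_mul, abs_mul, abs_of_pos (Real.exp_pos _)]
      have b1 : Real.exp (-A s) * |m s - k s| ≤ EB * |m s - k s| :=
        mul_le_mul_of_nonneg_right (hexpAneg s) (abs_nonneg _)
      have b2 : |Real.exp (-A s) - Real.exp (-A' s)| * |k s| ≤ EB * δ * |k s| :=
        mul_le_mul_of_nonneg_right (hexp2 s) (abs_nonneg _)
      linarith
    rw [MeasureTheory.integral_add hi1 hi2, MeasureTheory.integral_const_mul,
      MeasureTheory.integral_const_mul] at h2
    have := mul_le_mul_of_nonneg_left hkL1 hEB0.le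
    have := mul_le_mul_of_nonneg_left hkabs (mul_nonneg hEB0.le hδ0.le : (0:ℝ) ≤ EB * δ)
    nlinarith
  have hc'b : ∀ t, |c' t| ≤ EB * (Bm + 1) := by
    intro t
    refine (primAbs hc'int 0 t).trans ?_
    have h2 : ∫ x, |Real.exp (-A' x) * k x| ≤ ∫ x, EB * |k x| := by
      refine integral_mono hc'int.abs (hkint.abs.const_mul EB) fun s => ?_
      rw [abs_mul, abs_of_pos (Real.exp_pos _)]
      exact mul_le_mul_of_nonneg_right (hexpA'neg s) (abs_nonneg _)
    rw [MeasureTheory.integral_const_mul] at h2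
    have hEB0 : (0:ℝ) < EB := by positivity
    nlinarith
  set y' : ℝ → ℝ := fun t => Real.exp (A' t) * (c0 + c' t) with hy'
  have hydiff : ∀ t, |y t - y' t| ≤ K₁ * δ := by
    intro t
    have e1 : y t - y' t = (Real.exp (A t) - Real.exp (A' t)) * (c0 + c t) +
        Real.exp (A' t) * (c t - c' t) := by rw [hy, hy']; ring
    rw [e1]
    refine (abs_add_le _ _).trans ?_
    rw [abs_mul, abs_mul, abs_of_pos (Real.exp_pos _)]
    have b1 : |c0 + c t| ≤ |c0| + EB * Bm := (abs_add_le _ _).trans (by linarith [hcb t])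
    have b2 := mul_le_mul (hexp1 t) b1 (abs_nonneg _) (mul_nonneg hEB0.le hδ0.le)
    have b3 := mul_le_mul (hexpA' t) (hcd t) (abs_nonneg _) hEB0.le
    rw [hK₁]
    nlinarith [abs_nonneg (Real.exp (A t) - Real.exp (A' t)), abs_nonneg (c0 + c t)]
  have hy'b : ∀ t, |y' t| ≤ YB' := by
    intro t
    rw [hy', abs_mul, abs_of_pos (Real.exp_pos _), hYB']
    have b1 : |c0 + c' t| ≤ |c0| + EB * (Bm + 1) := (abs_add_le _ _).trans (by linarith [hc'b t])
    exact mul_le_mul (hexpA' t) b1 (abs_nonneg _) hEB0.le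
  have hid : y' t₂ - y' t₁ = ∫ s in t₁..t₂, (g s * y' s + k s) :=
    ode_cont g k hgc hkc c0 t₁ t₂
  have hy'c : Continuous y' := (hA'c.rexp).mul (continuous_const.add (hc'int.continuous_primitive 0))
  have hgy' : Integrable (fun s => g s * y' s + k s) := by
    refine Integrable.add ?_ hkint
    have : Integrable (fun s => y' s * g s) :=
      hgint.bdd_mul hy'c.aestronglyMeasurable
        (Filter.Eventually.of_forall fun s => by rw [Real.norm_eq_abs]; exact hy'b s)
    exact this.congr (Filter.Eventually.of_forall fun s => mul_comm _ _)
  have hintdiff : |(∫ s in t₁..t₂, (h s * y s + m s)) -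
      ∫ s in t₁..t₂, (g s * y' s + k s)| ≤ B * (K₁ * δ) + YB' * δ + δ := by
    have e1 : (∫ s in t₁..t₂, (h s * y s + m s)) - ∫ s in t₁..t₂, (g s * y' s + k s) =
        ∫ s in t₁..t₂, ((h s * y s + m s) - (g s * y' s + k s)) :=
      (intervalIntegral.integral_sub (hhy.intervalIntegrable)
        (hgy'.intervalIntegrable)).symm
    rw [e1]
    have hdfs : Integrable (fun s => (h s * y s + m s) - (g s * y' s + k s)) := hhy.sub hgy'
    refine (primAbs hdfs t₁ t₂).trans ?_
    have hi3 : Integrable (fun s => |h s| * (K₁ * δ)) := hh.abs.mul_const _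
    have hi4 : Integrable (fun s => |h s - g s| * YB') := hhg.abs.mul_const _
    have hi5 : Integrable (fun s => |m s - k s|) := hmk.abs
    have hi45 : Integrable (fun s => |h s - g s| * YB' + |m s - k s|) := hi4.add hi5
    have hint3 : Integrable (fun s => |h s| * (K₁ * δ) + (|h s - g s| * YB' + |m s - k s|)) :=
      hi3.add hi45
    have h2 : ∫ x, |(h x * y x + m x) - (g x * y' x + k x)| ≤
        ∫ x, (|h x| * (K₁ * δ) + (|h x - g x| * YB' + |m x - k x|)) := by
      refine integral_mono hdfs.abs hint3 fun s => ?_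
      have e2 : (h s * y s + m s) - (g s * y' s + k s) =
          h s * (y s - y' s) + ((h s - g s) * y' s + (m s - k s)) := by ring
      rw [e2]
      refine (abs_add_le _ _).trans ?_
      have b0 : |(h s - g s) * y' s + (m s - k s)| ≤ |h s - g s| * YB' + |m s - k s| := by
        refine (abs_add_le _ _).trans ?_
        rw [abs_mul]
        have := mul_le_mul_of_nonneg_left (hy'b s) (abs_nonneg (h s - g s))
        linarith
      rw [abs_mul]
      have := mul_le_mul_of_nonneg_left (hydiff s) (abs_nonneg (h s))
      linarith
    rw [MeasureTheory.integral_add hi3 hi45,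
      MeasureTheory.integral_add hi4 hi5,
      MeasureTheory.integral_mul_const, MeasureTheory.integral_mul_const] at h2
    have b3 : (∫ x, |h x|) * (K₁ * δ) ≤ B * (K₁ * δ) := le_of_eq (by rw [hB])
    have b4 : (∫ x, |h x - g x|) * YB' ≤ δ * YB' := mul_le_mul_of_nonneg_right hgL1 hYB'0
    nlinarith [hkL1]
  -- assemble
  have hfinal : |D| ≤ K₂ * δ := by
    have e1 : D = (y t₂ - y' t₂) - (y t₁ - y' t₁) -
        ((∫ s in t₁..t₂, (h s * y s + m s)) - ∫ s in t₁..t₂, (g s * y' s + k s)) := by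
      rw [hD, ← hid]; ring
    rw [e1]
    calc |(y t₂ - y' t₂) - (y t₁ - y' t₁) - _| ≤
        |(y t₂ - y' t₂) - (y t₁ - y' t₁)| + |(∫ s in t₁..t₂, (h s * y s + m s)) -
          ∫ s in t₁..t₂, (g s * y' s + k s)| := abs_sub _ _
      _ ≤ K₂ * δ := by
          have h5 : |(y t₂ - y' t₂) - (y t₁ - y' t₁)| ≤ K₁ * δ + K₁ * δ :=
            (abs_sub _ _).trans (by linarith [hydiff t₁, hydiff t₂])
          rw [hK₂]
          nlinarith [hintdiff, hδ0.le]
  linarith [hfinal.trans hδK]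


set_option maxHeartbeats 2000000 in
/-- The fundamental relative-energy inequality (4.6): if `F` satisfies the
one-sided condition `(F(t,x)-F(t,y), x-y) ≤ d(t,y)‖x-y‖²` with `d` locally
bounded, `u' = F(t,u)` and `E(t) = -v'(t) + F(t,v(t))`, then
`‖u(t)-v(t)‖² ≤ exp(∫₀ᵗ 2d(s,v(s)) ds)[‖u(0)-v(0)‖²
  + 2∫₀ᵗ exp(-∫₀ˢ 2d(ξ,v(ξ)) dξ)(E(s), u(s)-v(s)) ds]`. -/
theorem stmt4 {X : Type*} [NormedAddCommGroup X] [InnerProductSpace ℝ X]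
    [CompleteSpace X] (T : ℝ) (hT : 0 < T)
    (F : ℝ → X → X) (d : ℝ → X → ℝ)
    (hd : ∀ t ≥ (0:ℝ), ∀ x y : X, (inner ℝ (F t x - F t y) (x - y) : ℝ) ≤ d t y * ‖x - y‖ ^ 2)
    (hd_loc : ∀ R > (0:ℝ), ∃ C : ℝ, ∀ t ∈ Icc (0:ℝ) R, ∀ y : X, ‖y‖ ≤ R → |d t y| ≤ C)
    (u v : ℝ → X) (v' : ℝ → X)
    (hu : ∀ t ∈ Icc (0:ℝ) T, HasDerivAt u (F t (u t)) t)
    (hv : ∀ t ∈ Icc (0:ℝ) T, HasDerivAt v (v' t) t)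
    (E : ℝ → X) (hE : ∀ t ∈ Icc (0:ℝ) T, E t = -v' t + F t (v t))
    (hdint : IntegrableOn (fun t => d t (v t)) (Ioo 0 T))
    (hEint : IntegrableOn (fun t => (inner ℝ (E t) (u t - v t) : ℝ)) (Ioo 0 T)) :
    ∀ t ∈ Icc (0:ℝ) T,
      ‖u t - v t‖ ^ 2 ≤
        Real.exp (∫ s in (0:ℝ)..t, 2 * d s (v s)) *
          (‖u 0 - v 0‖ ^ 2 +
            2 * ∫ s in (0:ℝ)..t,
              Real.exp (-∫ ξ in (0:ℝ)..s, 2 * d ξ (v ξ)) *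
                (inner ℝ (E s) (u s - v s) : ℝ)) := by
  have hT0 : (0:ℝ) ≤ T := hT.le
  have hucont : ContinuousOn u (Icc 0 T) := fun s hs => ((hu s hs).continuousAt).continuousWithinAt
  have hvcont : ContinuousOn v (Icc 0 T) := fun s hs => ((hv s hs).continuousAt).continuousWithinAt
  set f : ℝ → ℝ := fun s => ‖u s - v s‖ ^ 2 with hfdef
  have hfcont : ContinuousOn f (Icc 0 T) := ((hucont.sub hvcont).norm.pow 2)
  -- bound for d along v
  obtain ⟨Rv, hRv⟩ := isCompact_Icc.exists_bound_of_continuousOn hvcont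
  have hRv0 : 0 ≤ Rv := le_trans (norm_nonneg _) (hRv 0 (left_mem_Icc.2 hT0))
  set R : ℝ := max T Rv + 1 with hRdef
  have hR0 : 0 < R := by
    have : T ≤ max T Rv := le_max_left _ _
    rw [hRdef]; linarith
  obtain ⟨C₀, hC₀⟩ := hd_loc R hR0
  set C : ℝ := |C₀| + 1 with hCdef
  have hC0 : 0 < C := by rw [hCdef]; positivity
  have hdC : ∀ s ∈ Icc (0:ℝ) T, |d s (v s)| ≤ C := by
    intro s hs
    have h1 : s ∈ Icc (0:ℝ) R := ⟨hs.1, by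
      have := le_max_left T Rv; rw [hRdef]; linarith [hs.2]⟩
    have h2 : ‖v s‖ ≤ R := by
      have := le_max_right T Rv; rw [hRdef]; linarith [hRv s hs]
    exact (hC₀ s h1 (v s) h2).trans (by rw [hCdef]; linarith [le_abs_self C₀])
  -- indicator functions
  set hfn : ℝ → ℝ := (Ioo (0:ℝ) T).indicator (fun s => 2 * d s (v s)) with hhfn
  set mfn : ℝ → ℝ := (Ioo (0:ℝ) T).indicator
    (fun s => 2 * (inner ℝ (E s) (u s - v s) : ℝ)) with hmfn
  have hfnint : Integrable hfn :=
    MeasureTheory.IntegrableOn.integrable_indicator (hdint.const_mul 2) measurableSet_Ioo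
  have mfnint : Integrable mfn :=
    MeasureTheory.IntegrableOn.integrable_indicator (hEint.const_mul 2) measurableSet_Ioo
  have hfnbd : ∀ s, |hfn s| ≤ 2 * C := by
    intro s
    rw [hhfn]
    by_cases hs : s ∈ Ioo (0:ℝ) T
    · rw [indicator_of_mem hs]
      rw [abs_mul, abs_two]
      have := hdC s ⟨hs.1.le, hs.2.le⟩
      linarith
    · rw [indicator_of_notMem hs, abs_zero]; positivity
  -- primitive A
  set A : ℝ → ℝ := fun r => ∫ s in (0:ℝ)..r, hfn s with hAdef
  have hAcont : Continuous A := hfnint.continuous_primitive 0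
  have haeNe : ∀ a : ℝ, ∀ᵐ x : ℝ, x ≠ a := by
    intro a
    have hset : {x : ℝ | ¬ x ≠ a} = {a} := by ext x; simp
    rw [MeasureTheory.ae_iff, hset]
    exact measure_singleton a
  have hAeq : ∀ r ∈ Icc (0:ℝ) T, A r = ∫ s in (0:ℝ)..r, 2 * d s (v s) := by
    intro r hr
    apply intervalIntegral.integral_congr_ae
    filter_upwards [haeNe T] with s hsT hsI
    rw [uIoc_of_le hr.1] at hsI
    have hsIoo : s ∈ Ioo (0:ℝ) T := ⟨hsI.1, lt_of_le_of_ne (hsI.2.trans hr.2) hsT⟩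
    rw [hhfn, indicator_of_mem hsIoo]
  -- integrability of products
  have haux : ∀ p : ℝ → ℝ, ContinuousOn p (Icc 0 T) → ∀ a b : ℝ, 0 ≤ a → b ≤ T →
      IntegrableOn (fun s => hfn s * p s) (Icc a b) := by
    intro p hp a b ha hb
    rcases le_or_gt a b with hab | hab
    · have hsub : Icc a b ⊆ Icc (0:ℝ) T := Icc_subset_Icc ha hb
      obtain ⟨pB, hpB⟩ := isCompact_Icc.exists_bound_of_continuousOn (hp.mono hsub)
      have hmeas : AEStronglyMeasurable p (volume.restrict (Icc a b)) :=
        (hp.mono hsub).aestronglyMeasurable measurableSet_Icc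
      have h1 : IntegrableOn (fun s => p s * hfn s) (Icc a b) :=
        (hfnint.integrableOn).bdd_mul hmeas
          ((ae_restrict_iff' measurableSet_Icc).2 (Filter.Eventually.of_forall
            fun s hs => hpB s hs))
      exact h1.congr (Filter.Eventually.of_forall fun s => mul_comm _ _)
    · rw [Icc_eq_empty (not_le.2 hab)]
      exact integrableOn_empty
  -- step 2: energy inequality on subintervals
  have step2 : ∀ r₁ r₂ : ℝ, 0 ≤ r₁ → r₁ ≤ r₂ → r₂ ≤ T →
      f r₂ - f r₁ ≤ ∫ s in r₁..r₂, (hfn s * f s + mfn s) := by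
    intro r₁ r₂ h0 h12 h2T
    have hsub : Icc r₁ r₂ ⊆ Icc (0:ℝ) T := Icc_subset_Icc h0 h2T
    set g' : ℝ → ℝ := fun x => 2 * (inner ℝ (u x - v x) (F x (u x) - v' x) : ℝ) with hg'
    refine intervalIntegral.sub_le_integral_of_hasDeriv_right_of_le (g' := g') h12
      (hfcont.mono hsub) ?_ ?_ ?_
    · intro x hx
      have hxIcc : x ∈ Icc (0:ℝ) T := ⟨h0.trans hx.1.le, hx.2.le.trans h2T⟩
      have hw : HasDerivAt (fun s => u s - v s) (F x (u x) - v' x) x :=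
        (hu x hxIcc).sub (hv x hxIcc)
      have hi := HasDerivAt.inner ℝ hw hw
      have heq : f = fun s => (inner ℝ (u s - v s) (u s - v s) : ℝ) := by
        funext s
        rw [hfdef]
        exact (real_inner_self_eq_norm_sq _).symm
      have hd2 : HasDerivAt f (g' x) x := by
        rw [heq, hg']
        refine hi.congr_deriv ?_
        beta_reduce
        rw [real_inner_comm (u x - v x) (F x (u x) - v' x)]
        ring
      exact hd2.hasDerivWithinAt
    · exact (haux f hfcont r₁ r₂ h0 h2T).add (mfnint.integrableOn)
    · intro x hx
      have hxIoo : x ∈ Ioo (0:ℝ) T := ⟨lt_of_le_of_lt h0 hx.1, lt_of_lt_of_le hx.2 h2T⟩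
      have hxIcc : x ∈ Icc (0:ℝ) T := ⟨hxIoo.1.le, hxIoo.2.le⟩
      rw [hhfn, hmfn, indicator_of_mem hxIoo, indicator_of_mem hxIoo]
      have hEx : E x = -v' x + F x (v x) := hE x hxIcc
      have h1 : (inner ℝ (F x (u x) - F x (v x)) (u x - v x) : ℝ) ≤
          d x (v x) * ‖u x - v x‖ ^ 2 := hd x hxIoo.1.le (u x) (v x)
      have hsplit : (inner ℝ (u x - v x) (F x (u x) - v' x) : ℝ) =
          (inner ℝ (F x (u x) - F x (v x)) (u x - v x) : ℝ) +
            (inner ℝ (E x) (u x - v x) : ℝ) := by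
        rw [real_inner_comm]
        have hspl : F x (u x) - v' x = (F x (u x) - F x (v x)) + E x := by
          rw [hEx]; abel
        rw [hspl, inner_add_left]
      have hfx : f x = ‖u x - v x‖ ^ 2 := by rw [hfdef]
      simp only [hg']
      rw [hsplit, hfx]
      linarith
  -- the c function
  have hAb : ∀ r, |A r| ≤ ∫ x, |hfn x| := fun r => primAbs hfnint 0 r
  have hexpint : Integrable (fun s => Real.exp (-A s) * mfn s) :=
    mfnint.bdd_mul (c := Real.exp (∫ x, |hfn x|)) ((hAcont.neg).rexp).aestronglyMeasurable
      (Filter.Eventually.of_forall fun s => by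
        rw [Real.norm_eq_abs, abs_of_pos (Real.exp_pos _)]
        exact Real.exp_le_exp.2 (by linarith [(abs_le.1 (hAb s)).1]))
  set c : ℝ → ℝ := fun r => ∫ s in (0:ℝ)..r, Real.exp (-A s) * mfn s with hcdef
  have hccont : Continuous c := hexpint.continuous_primitive 0
  -- the key comparison
  have key : ∀ ε : ℝ, 0 < ε → ∀ r ∈ Icc (0:ℝ) T,
      f r ≤ Real.exp (A r) * (f 0 + ε + c r) := by
    intro ε hε
    set y : ℝ → ℝ := fun r => Real.exp (A r) * (f 0 + ε + c r) with hydef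
    have hyid : ∀ r₁ r₂ : ℝ, y r₂ - y r₁ = ∫ s in r₁..r₂, (hfn s * y s + mfn s) :=
      fun r₁ r₂ => ode_identity hfn mfn hfnint mfnint (f 0 + ε) r₁ r₂
    have hycont : Continuous y := (hAcont.rexp).mul (continuous_const.add hccont)
    by_contra hcon
    push_neg at hcon
    obtain ⟨r₀, hr₀, hr₀lt₀⟩ := hcon
    have hr₀lt : y r₀ < f r₀ := hr₀lt₀
    set S : Set ℝ := Icc 0 T ∩ (fun r => f r - y r) ⁻¹' (Ici 0) with hSdef
    have hSclosed : IsClosed S :=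
      (hfcont.sub hycont.continuousOn).preimage_isClosed_of_isClosed isClosed_Icc isClosed_Ici
    have hSne : S.Nonempty := ⟨r₀, hr₀, by simp only [mem_preimage, mem_Ici]; linarith⟩
    have hSbdd : BddBelow S := ⟨0, fun x hx => hx.1.1⟩
    set τ : ℝ := sInf S with hτdef
    have hτS : τ ∈ S := hSclosed.csInf_mem hSne hSbdd
    have hτIcc : τ ∈ Icc (0:ℝ) T := hτS.1
    have hyfτ : y τ ≤ f τ := by
      have := hτS.2
      simp only [mem_preimage, mem_Ici] at this
      linarith
    have hA0 : A 0 = 0 := intervalIntegral.integral_same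
    have hc0 : c 0 = 0 := intervalIntegral.integral_same
    have hy0 : y 0 = f 0 + ε := by
      rw [hydef]
      simp only [hA0, hc0, Real.exp_zero]
      ring
    have hτpos : 0 < τ := by
      cases' eq_or_lt_of_le hτIcc.1 with h h
      · exfalso
        rw [← h] at hyfτ
        rw [hy0] at hyfτ
        linarith
      · exact h
    have hbefore : ∀ s, 0 ≤ s → s < τ → f s < y s := by
      intro s h0s hsτ
      by_contra hns
      push_neg at hns
      have hsS : s ∈ S := ⟨⟨h0s, hsτ.le.trans hτIcc.2⟩, by
        simp only [mem_preimage, mem_Ici]; linarith⟩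
      have := csInf_le hSbdd hsS
      rw [← hτdef] at this
      linarith
    set t₁ : ℝ := max (τ - (8*C)⁻¹) (τ/2) with ht₁def
    have h8C : 0 < (8*C)⁻¹ := by positivity
    have ht₁τ : t₁ < τ := by
      rw [ht₁def]
      exact max_lt (by linarith) (by linarith)
    have ht₁0 : 0 ≤ t₁ := le_trans (by linarith) (le_max_right (τ - (8*C)⁻¹) (τ/2))
    have hgap : τ - t₁ ≤ (8*C)⁻¹ := by
      have := le_max_left (τ - (8*C)⁻¹) (τ/2)
      rw [ht₁def]; linarith
    set w : ℝ → ℝ := fun s => y s - f s with hwdef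
    have hwcontOT : ContinuousOn w (Icc 0 T) := hycont.continuousOn.sub hfcont
    have hwineq : ∀ r ∈ Icc t₁ τ, w r ≤ ∫ s in r..τ, (2*C) * w s := by
      intro r hr
      have h0r : 0 ≤ r := ht₁0.trans hr.1
      have hrτ : r ≤ τ := hr.2
      have hτT : τ ≤ T := hτIcc.2
      have hiy : IntervalIntegrable (fun s => hfn s * y s) volume r τ :=
        (intervalIntegrable_iff_integrableOn_Icc_of_le hrτ).2
          (haux y hycont.continuousOn r τ h0r hτT)
      have hif : IntervalIntegrable (fun s => hfn s * f s) volume r τ :=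
        (intervalIntegrable_iff_integrableOn_Icc_of_le hrτ).2 (haux f hfcont r τ h0r hτT)
      have hiw : IntervalIntegrable (fun s => hfn s * w s) volume r τ :=
        (intervalIntegrable_iff_integrableOn_Icc_of_le hrτ).2 (haux w hwcontOT r τ h0r hτT)
      have him : IntervalIntegrable mfn volume r τ := mfnint.intervalIntegrable
      have hi2Cw : IntervalIntegrable (fun s => (2*C) * w s) volume r τ :=
        (intervalIntegrable_iff_integrableOn_Icc_of_le hrτ).2
          ((continuousOn_const.mul (hwcontOT.mono (Icc_subset_Icc h0r hτT))).integrableOn_compact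
            isCompact_Icc)
      have hstep := step2 r τ h0r hrτ hτT
      have hyidr := hyid r τ
      have hsubint : (∫ s in r..τ, (hfn s * y s + mfn s)) -
          (∫ s in r..τ, (hfn s * f s + mfn s)) = ∫ s in r..τ, hfn s * w s := by
        rw [← intervalIntegral.integral_sub (hiy.add him) (hif.add him)]
        apply intervalIntegral.integral_congr
        intro s _
        simp only [hwdef]
        ring
      have hwle : w τ - w r ≥ ∫ s in r..τ, hfn s * w s := by
        simp only [hwdef]
        linarith [hstep, hyidr, hsubint]
      have hwτ : w τ ≤ 0 := by simp only [hwdef]; linarith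
      have hmono : ∫ s in r..τ, (-(hfn s * w s)) ≤ ∫ s in r..τ, (2*C) * w s := by
        apply intervalIntegral.integral_mono_ae_restrict hrτ hiw.neg hi2Cw
        refine (ae_restrict_iff' measurableSet_Icc).2 ?_
        filter_upwards [haeNe τ] with s hsτ hsmem
        have hs0 : 0 ≤ s := h0r.trans hsmem.1
        have hsτ' : s < τ := lt_of_le_of_ne hsmem.2 hsτ
        have hw0 : 0 ≤ w s := by simp only [hwdef]; linarith [hbefore s hs0 hsτ']
        have habs : |hfn s * w s| ≤ 2*C * w s := by
          rw [abs_mul, abs_of_nonneg hw0]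
          exact mul_le_mul_of_nonneg_right (hfnbd s) hw0
        have := neg_abs_le (hfn s * w s)
        simp only [Pi.neg_apply]
        linarith
      have h6 : w r ≤ w τ + ∫ s in r..τ, -(hfn s * w s) := by
        rw [intervalIntegral.integral_neg]
        linarith
      linarith
    obtain ⟨r₀', hr₀'mem, hr₀'max⟩ :=
      isCompact_Icc.exists_isMaxOn (nonempty_Icc.2 ht₁τ.le)
        (hwcontOT.mono (Icc_subset_Icc ht₁0 hτIcc.2))
    have hmax : ∀ x ∈ Icc t₁ τ, w x ≤ w r₀' := fun x hx => hr₀'max hx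
    have hwt₁pos : 0 < w t₁ := by
      simp only [hwdef]
      linarith [hbefore t₁ ht₁0 ht₁τ]
    have hwr₀pos : 0 < w r₀' := lt_of_lt_of_le hwt₁pos (hmax t₁ (left_mem_Icc.2 ht₁τ.le))
    have h1 := hwineq r₀' hr₀'mem
    have h2 : ∫ s in r₀'..τ, (2*C) * w s ≤ ∫ s in r₀'..τ, (2*C) * w r₀' := by
      have hi2Cw' : IntervalIntegrable (fun s => (2*C) * w s) volume r₀' τ :=
        (intervalIntegrable_iff_integrableOn_Icc_of_le hr₀'mem.2).2
          ((continuousOn_const.mul (hwcontOT.mono (Icc_subset_Icc (ht₁0.trans hr₀'mem.1)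
            hτIcc.2))).integrableOn_compact isCompact_Icc)
      apply intervalIntegral.integral_mono_on hr₀'mem.2 hi2Cw' intervalIntegrable_const
      intro x hx
      have hxmem : x ∈ Icc t₁ τ := ⟨hr₀'mem.1.trans hx.1, hx.2⟩
      exact mul_le_mul_of_nonneg_left (hmax x hxmem) (by positivity)
    have h3 : ∫ s in r₀'..τ, (2*C) * w r₀' = (τ - r₀') * (2*C*w r₀') := by
      rw [intervalIntegral.integral_const, smul_eq_mul]
    have h4 : (τ - r₀') * (2*C*w r₀') ≤ (1/4) * w r₀' := by
      have hτr : τ - r₀' ≤ (8*C)⁻¹ := by linarith [hr₀'mem.1, hgap]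
      have h5 : (8*C)⁻¹ * (2*C) = 1/4 := by field_simp; ring
      have h8 : (τ - r₀') * (2*C) ≤ 1/4 := by
        calc (τ - r₀') * (2*C) ≤ (8*C)⁻¹ * (2*C) :=
              mul_le_mul_of_nonneg_right hτr (by linarith)
          _ = 1/4 := h5
      calc (τ - r₀') * (2*C*w r₀') = ((τ - r₀') * (2*C)) * w r₀' := by ring
        _ ≤ (1/4) * w r₀' := mul_le_mul_of_nonneg_right h8 hwr₀pos.le
    have h9 := h1.trans (h2.trans (h3.le.trans h4))
    simp only [hwdef] at h9 hwr₀pos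
    linarith
  -- pass to the limit ε → 0
  intro t ht
  have hlim : f t ≤ Real.exp (A t) * (f 0 + c t) := by
    by_contra hcon
    push_neg at hcon
    have hEA : 0 < Real.exp (A t) := Real.exp_pos _
    set X0 : ℝ := Real.exp (A t) * (f 0 + c t) with hX0
    set ε₀ : ℝ := (f t - X0) / (2 * Real.exp (A t)) with hε₀
    have hε₀pos : 0 < ε₀ := div_pos (by linarith) (by linarith)
    have hk := key ε₀ hε₀pos t ht
    have hexpand : Real.exp (A t) * (f 0 + ε₀ + c t) = X0 + (f t - X0) / 2 := by
      rw [hX0, hε₀]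
      field_simp
      ring
    rw [hexpand] at hk
    linarith
  have hct : c t = 2 * ∫ s in (0:ℝ)..t, Real.exp (-∫ ξ in (0:ℝ)..s, 2 * d ξ (v ξ)) *
      (inner ℝ (E s) (u s - v s) : ℝ) := by
    rw [hcdef, ← intervalIntegral.integral_const_mul]
    apply intervalIntegral.integral_congr_ae
    filter_upwards [haeNe T] with s hsT hsI
    rw [uIoc_of_le ht.1] at hsI
    have hsIoo : s ∈ Ioo (0:ℝ) T := ⟨hsI.1, lt_of_le_of_ne (hsI.2.trans ht.2) hsT⟩
    have hsIcc : s ∈ Icc (0:ℝ) T := ⟨hsIoo.1.le, hsIoo.2.le⟩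
    rw [hmfn, indicator_of_mem hsIoo, ← hAeq s hsIcc]
    ring
  have hAt := hAeq t ht
  rw [← hAt, ← hct]
  exact hlim
end

section
/- Let X be a real Hilbert space, F : [0,∞) × X → X satisfying (F(t,x) − F(t,y), x − y) ≤ d(t,y)·‖x − y‖² with d locally bounded, and let u_T : [0,T] → X be a differentiable solution of u'(t) = F(t,u(t)), u(0) = a. If u : [0,∞) → X is a dissipative solution with the same initial datum a — i.e., u satisfies inequality (4.6) of the paper for all differentiable test functions v in a class containing u_T — then u(t) = u_T(t) for all t ∈ [0,T]. -/
open MeasureTheory Set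

/-- Proposition 4.2 a): if a regular (differentiable) solution `u_T` of
`u' = F(t,u)`, `u(0) = a` exists on `[0,T]`, then every dissipative solution
with the same initial datum coincides with `u_T` on `[0,T]`.  A dissipative
solution is weakly-continuous `u` satisfying inequality (4.6) for every test
function `v` in a class `R` of differentiable functions; the class is assumed
to contain an extension of `u_T`. -/
theorem stmt5 {X : Type*} [NormedAddCommGroup X] [InnerProductSpace ℝ X]
    [CompleteSpace X] (T : ℝ) (hT : 0 < T) (a : X)
    (F : ℝ → X → X) (d : ℝ → X → ℝ)
    (hd : ∀ t ≥ (0:ℝ), ∀ x y : X, (inner ℝ (F t x - F t y) (x - y) : ℝ) ≤ d t y * ‖x - y‖ ^ 2)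
    (hd_loc : ∀ R > (0:ℝ), ∃ C : ℝ, ∀ t ∈ Icc (0:ℝ) R, ∀ y : X, ‖y‖ ≤ R → |d t y| ≤ C)
    -- the regular solution on [0,T]
    (uT : ℝ → X) (huT : ∀ t ∈ Icc (0:ℝ) T, HasDerivAt uT (F t (uT t)) t)
    (huT0 : uT 0 = a)
    -- the class R of test functions, with their derivatives D v
    (R : Set (ℝ → X)) (D : (ℝ → X) → ℝ → X)
    (hR : ∀ v ∈ R, ∀ t ≥ (0:ℝ), HasDerivAt v (D v t) t)
    (hmem : ∃ v ∈ R, ∀ t ∈ Icc (0:ℝ) T, v t = uT t)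
    -- the dissipative solution with the same initial datum
    (u : ℝ → X)
    (hu_cont : ∀ φ : X, Continuous fun t => (inner ℝ φ (u t) : ℝ))
    (hdiss : ∀ v ∈ R, ∀ t ≥ (0:ℝ),
      ‖u t - v t‖ ^ 2 ≤
        Real.exp (∫ s in (0:ℝ)..t, 2 * d s (v s)) *
          (‖a - v 0‖ ^ 2 +
            2 * ∫ s in (0:ℝ)..t,
              Real.exp (-∫ ξ in (0:ℝ)..s, 2 * d ξ (v ξ)) *
                (inner ℝ (-D v s + F s (v s)) (u s - v s) : ℝ))) :
    ∀ t ∈ Icc (0:ℝ) T, u t = uT t := by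
  obtain ⟨v, hv, hvuT⟩ := hmem
  -- On the open interval, D v s = F s (v s)
  have hDv : ∀ s ∈ Ioo (0:ℝ) T, D v s = F s (v s) := by
    intro s hs
    have hnhds : Icc (0:ℝ) T ∈ nhds s := by
      exact Filter.mem_of_superset (Ioo_mem_nhds hs.1 hs.2) Ioo_subset_Icc_self
    have heq : v =ᶠ[nhds s] uT := Filter.eventuallyEq_of_mem hnhds hvuT
    have h1 : HasDerivAt v (F s (uT s)) s :=
      (huT s ⟨hs.1.le, hs.2.le⟩).congr_of_eventuallyEq heq
    have h2 : HasDerivAt v (D v s) s := hR v hv s hs.1.le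
    have := h1.unique h2
    rw [← this, hvuT s ⟨hs.1.le, hs.2.le⟩]
  intro t ht
  have ht0 : (0:ℝ) ≤ t := ht.1
  -- the inner-product integrand vanishes a.e.
  have hint : (∫ s in (0:ℝ)..t,
      Real.exp (-∫ ξ in (0:ℝ)..s, 2 * d ξ (v ξ)) *
        (inner ℝ (-D v s + F s (v s)) (u s - v s) : ℝ)) = 0 := by
    have hTne : ∀ᵐ s : ℝ, s ≠ T := by
      have : (MeasureTheory.volume {T} : ENNReal) = 0 := Real.volume_singleton
      filter_upwards [MeasureTheory.measure_eq_zero_iff_ae_notMem.mp this] with s hs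
      simpa using hs
    have hcongr : ∀ᵐ s : ℝ, s ∈ Set.uIoc (0:ℝ) t →
        (Real.exp (-∫ ξ in (0:ℝ)..s, 2 * d ξ (v ξ)) *
          (inner ℝ (-D v s + F s (v s)) (u s - v s) : ℝ)) = (0:ℝ) := by
      filter_upwards [hTne] with s hsT hs
      rw [Set.uIoc_of_le ht0] at hs
      have hsT' : s < T := lt_of_le_of_ne (hs.2.trans ht.2) hsT
      rw [hDv s ⟨hs.1, hsT'⟩]
      simp
    calc (∫ s in (0:ℝ)..t,
          Real.exp (-∫ ξ in (0:ℝ)..s, 2 * d ξ (v ξ)) *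
            (inner ℝ (-D v s + F s (v s)) (u s - v s) : ℝ))
        = ∫ _ in (0:ℝ)..t, (0:ℝ) := intervalIntegral.integral_congr_ae hcongr
      _ = 0 := by simp
  have hv0 : v 0 = a := by rw [hvuT 0 ⟨le_refl _, hT.le⟩, huT0]
  have h := hdiss v hv t ht0
  rw [hint, hv0] at h
  simp only [sub_self, norm_zero] at h
  have h0 : ‖u t - v t‖ ^ 2 ≤ 0 := by
    calc ‖u t - v t‖ ^ 2 ≤ _ := h
      _ = 0 := by ring
  have : u t - v t = 0 := by
    have := sq_nonneg ‖u t - v t‖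
    have hn : ‖u t - v t‖ = 0 := by nlinarith
    exact norm_eq_zero.mp hn
  have := sub_eq_zero.mp this
  rw [this, hvuT t ht]
end
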